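/- There exists a universal constant C > 0 such that the following holds. Let φ : [a, b] → ℝ be a twice continuously differentiable convex function such that φ'' is convex on [a, b] and m := min_{x ∈ [a, b]} φ''(x) > 0, and let X be a random variable on [a, b] with density proportional to e^{−φ(x)}. Then Var(X) ≤ C / m. -/

import Mathlib

open Set

/-- variance bound for a log-concave density `∝ e^{-φ}` on `[a,b]`
when `φ` and `φ''` are convex and `φ'' ≥ m > 0`. -/
theorem variance_bound_convex_second_derivative :
    ∃ C : ℝ, 0 < C ∧
      ∀ (a b : ℝ), a ≤ b → ∀ (φ φ' φ'' : ℝ → ℝ),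
        (∀ t ∈ Icc a b, HasDerivWithinAt φ (φ' t) (Icc a b) t) →
        (∀ t ∈ Icc a b, HasDerivWithinAt φ' (φ'' t) (Icc a b) t) →
        ContinuousOn φ'' (Icc a b) →
        ConvexOn ℝ (Icc a b) φ →
        ConvexOn ℝ (Icc a b) φ'' →
        ∀ m : ℝ, 0 < m → IsLeast (φ'' '' Icc a b) m →
          (∫ x in a..b, x ^ 2 * Real.exp (-φ x)) / (∫ x in a..b, Real.exp (-φ x)) -
              ((∫ x in a..b, x * Real.exp (-φ x)) / (∫ x in a..b, Real.exp (-φ x))) ^ 2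
            ≤ C / m := by
  refine ⟨2, by norm_num, ?_⟩
  intro a b hab φ φ' φ'' hφ hφ' hφ''c _ _ m hm hleast
  rcases eq_or_lt_of_le hab with rfl | hab'
  · simp [intervalIntegral.integral_same]
    positivity
  -- notation
  set E : ℝ → ℝ := fun x => Real.exp (-φ x) with hE
  have hEpos : ∀ x, 0 < E x := fun x => Real.exp_pos _
  -- continuity
  have hφc : ContinuousOn φ (Icc a b) := fun t ht => (hφ t ht).continuousWithinAt
  have hφ'c : ContinuousOn φ' (Icc a b) := fun t ht => (hφ' t ht).continuousWithinAt
  have hEc : ContinuousOn E (Icc a b) := (Real.continuous_exp.comp_continuousOn hφc.neg)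
  have huIcc : uIcc a b = Icc a b := uIcc_of_le hab
  -- integrability helpers
  have intE : IntervalIntegrable E MeasureTheory.volume a b :=
    (hEc.mono huIcc.subset).intervalIntegrable
  -- minimizer of φ
  obtain ⟨x₀, hx₀, hmin⟩ :=
    (isCompact_Icc).exists_isMinOn (nonempty_Icc.2 hab) hφc
  have hm_le : ∀ x ∈ Icc a b, m ≤ φ'' x := fun x hx => hleast.2 ⟨x, hx, rfl⟩
  -- key pointwise inequality: (x - x₀) * φ' x ≥ m/2 (x-x₀)^2
  have key : ∀ x ∈ Icc a b, m / 2 * (x - x₀) ^ 2 ≤ (x - x₀) * φ' x := by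
    set H : ℝ → ℝ := fun x => (x - x₀) * φ' x - m / 2 * (x - x₀) ^ 2 - (φ x - φ x₀) with hHdef
    have hH : ∀ x ∈ Icc a b,
        HasDerivWithinAt H ((x - x₀) * (φ'' x - m)) (Icc a b) x := by
      intro x hx
      have h1 : HasDerivWithinAt (fun x => (x - x₀) * φ' x)
          (1 * φ' x + (x - x₀) * φ'' x) (Icc a b) x :=
        ((hasDerivWithinAt_id x _).sub_const x₀).mul (hφ' x hx)
      have h2 : HasDerivWithinAt (fun x => m / 2 * (x - x₀) ^ 2)
          (m / 2 * (2 * (x - x₀) ^ 1 * 1)) (Icc a b) x :=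
        (((hasDerivWithinAt_id x _).sub_const x₀).pow 2).const_mul (m / 2)
      have h3 : HasDerivWithinAt (fun x => φ x - φ x₀) (φ' x) (Icc a b) x :=
        (hφ x hx).sub_const _
      have := (h1.sub h2).sub h3
      exact this.congr_deriv (by ring)
    have hHc : ContinuousOn H (Icc a b) := fun t ht => (hH t ht).continuousWithinAt
    have hHx₀ : H x₀ = 0 := by simp [hHdef]
    have hHnonneg : ∀ x ∈ Icc a b, 0 ≤ H x := by
      intro x hx
      rcases le_total x₀ x with hxx | hxx
      · have hmono : MonotoneOn H (Icc x₀ b) := by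
          apply monotoneOn_of_hasDerivWithinAt_nonneg (convex_Icc _ _)
            (hHc.mono (Icc_subset_Icc hx₀.1 le_rfl))
            (f' := fun x => (x - x₀) * (φ'' x - m))
          · intro y hy
            rw [interior_Icc] at hy
            refine (hH y ⟨le_of_lt (lt_of_le_of_lt hx₀.1 hy.1), le_of_lt hy.2⟩).mono ?_
            intro z hz
            rw [interior_Icc] at hz
            exact ⟨le_trans hx₀.1 hz.1.le, hz.2.le⟩
          · intro y hy
            rw [interior_Icc] at hy
            have : m ≤ φ'' y := hm_le y ⟨le_trans hx₀.1 hy.1.le, hy.2.le⟩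
            nlinarith [hy.1]
        have := hmono ⟨le_rfl, hx₀.2⟩ ⟨hxx, hx.2⟩ hxx
        linarith [hHx₀ ▸ this]
      · have hanti : AntitoneOn H (Icc a x₀) := by
          apply antitoneOn_of_hasDerivWithinAt_nonpos (convex_Icc _ _)
            (hHc.mono (Icc_subset_Icc le_rfl hx₀.2))
            (f' := fun x => (x - x₀) * (φ'' x - m))
          · intro y hy
            rw [interior_Icc] at hy
            refine (hH y ⟨hy.1.le, le_trans hy.2.le hx₀.2⟩).mono ?_
            intro z hz
            rw [interior_Icc] at hz
            exact ⟨hz.1.le, le_trans hz.2.le hx₀.2⟩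
          · intro y hy
            rw [interior_Icc] at hy
            have : m ≤ φ'' y := hm_le y ⟨hy.1.le, le_trans hy.2.le hx₀.2⟩
            nlinarith [hy.2]
        have := hanti ⟨hx.1, hxx⟩ ⟨hx₀.1, le_rfl⟩ hxx
        linarith [hHx₀ ▸ this]
    intro x hx
    have h0 := hHnonneg x hx
    have h1 : φ x₀ ≤ φ x := hmin hx
    simp only [hHdef] at h0
    linarith
  -- denominator positive
  have hI : 0 < ∫ x in a..b, E x := by
    apply intervalIntegral.intervalIntegral_pos_of_pos_on intE
      (fun x _ => hEpos x) hab'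
  set I : ℝ := ∫ x in a..b, E x with hIdef
  -- integration by parts
  set F : ℝ → ℝ := fun x => (x - x₀) * E x with hFdef
  have hF' : ∀ x ∈ Icc a b,
      HasDerivWithinAt F (E x - (x - x₀) * φ' x * E x) (Icc a b) x := by
    intro x hx
    have hEd : HasDerivWithinAt E (E x * (-φ' x)) (Icc a b) x :=
      ((hφ x hx).neg).exp
    have := ((hasDerivWithinAt_id x _).sub_const x₀).mul hEd
    exact this.congr_deriv (by simp only [id_eq]; ring)
  have hFc : ContinuousOn F (Icc a b) := fun t ht => (hF' t ht).continuousWithinAt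
  have intG : IntervalIntegrable (fun x => (x - x₀) * φ' x * E x) MeasureTheory.volume a b := by
    apply ContinuousOn.intervalIntegrable
    rw [huIcc]
    exact (((continuousOn_id.sub continuousOn_const).mul hφ'c).mul hEc)
  have intF' : IntervalIntegrable (fun x => E x - (x - x₀) * φ' x * E x)
      MeasureTheory.volume a b := intE.sub intG
  have ibp : ∫ x in a..b, (E x - (x - x₀) * φ' x * E x) = F b - F a := by
    apply intervalIntegral.integral_eq_sub_of_hasDeriv_right_of_le hab hFc
    · intro x hx
      exact ((hF' x ⟨hx.1.le, hx.2.le⟩).hasDerivAt (Icc_mem_nhds hx.1 hx.2)).hasDerivWithinAt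
    · exact intF'
  have hFb : 0 ≤ F b - F a := by
    have h1 : 0 ≤ (b - x₀) * E b := mul_nonneg (by linarith [hx₀.2]) (hEpos b).le
    have h2 : (a - x₀) * E a ≤ 0 :=
      mul_nonpos_of_nonpos_of_nonneg (by linarith [hx₀.1]) (hEpos a).le
    simp only [hFdef]
    linarith
  have hsplit : ∫ x in a..b, (E x - (x - x₀) * φ' x * E x)
      = I - ∫ x in a..b, (x - x₀) * φ' x * E x := by
    rw [intervalIntegral.integral_sub intE intG]
  have hGle : (∫ x in a..b, (x - x₀) * φ' x * E x) ≤ I := by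
    have := ibp.symm.trans hsplit
    linarith
  -- J := ∫ (x-x₀)^2 E x
  have intJ : IntervalIntegrable (fun x => (x - x₀) ^ 2 * E x) MeasureTheory.volume a b := by
    apply ContinuousOn.intervalIntegrable
    rw [huIcc]
    exact ((continuousOn_id.sub continuousOn_const).pow 2).mul hEc
  set J : ℝ := ∫ x in a..b, (x - x₀) ^ 2 * E x with hJdef
  have hJle : m / 2 * J ≤ I := by
    have hmono : m / 2 * J = ∫ x in a..b, m / 2 * ((x - x₀) ^ 2 * E x) := by
      rw [intervalIntegral.integral_const_mul]
    rw [hmono]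
    refine le_trans (intervalIntegral.integral_mono_on hab (intJ.const_mul _) intG ?_) hGle
    intro x hx
    have := key x hx
    have hce := (hEpos x).le
    nlinarith
  have hJ2 : J ≤ 2 / m * I := by
    rw [div_mul_eq_mul_div, le_div_iff₀ hm]
    linarith
  have hJnonneg : 0 ≤ J := by
    rw [hJdef]
    apply intervalIntegral.integral_nonneg hab
    intro x _
    positivity
  -- expand J
  set N1 : ℝ := ∫ x in a..b, x * E x with hN1def
  set N2 : ℝ := ∫ x in a..b, x ^ 2 * E x with hN2def
  have intN1 : IntervalIntegrable (fun x => x * E x) MeasureTheory.volume a b := by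
    apply ContinuousOn.intervalIntegrable
    rw [huIcc]
    exact continuousOn_id.mul hEc
  have intN2 : IntervalIntegrable (fun x => x ^ 2 * E x) MeasureTheory.volume a b := by
    apply ContinuousOn.intervalIntegrable
    rw [huIcc]
    exact (continuousOn_id.pow 2).mul hEc
  have hJexp : J = N2 - 2 * x₀ * N1 + x₀ ^ 2 * I := by
    have : (fun x => (x - x₀) ^ 2 * E x)
        = fun x => x ^ 2 * E x - 2 * x₀ * (x * E x) + x₀ ^ 2 * E x := by
      funext x; ring
    rw [hJdef, this, intervalIntegral.integral_add ((intN2.sub (intN1.const_mul _)))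
      (intE.const_mul _), intervalIntegral.integral_sub intN2 (intN1.const_mul _),
      intervalIntegral.integral_const_mul, intervalIntegral.integral_const_mul]
  -- conclude
  have hIne : I ≠ 0 := ne_of_gt hI
  have hvar : N2 / I - (N1 / I) ^ 2 = J / I - (N1 / I - x₀) ^ 2 := by
    rw [hJexp]
    field_simp
    ring
  have hfinal : N2 / I - (N1 / I) ^ 2 ≤ 2 / m := by
    rw [hvar]
    have : J / I ≤ 2 / m := by
      rw [div_le_iff₀ hI]
      linarith [hJ2]
    nlinarith [sq_nonneg (N1 / I - x₀)]
  exact hfinal
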